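/- Let d, n ∈ ℕ and define the hyperbolic cross Λ = {ν ∈ ℤ^d : ∏_{l=1}^d (|ν_l| + 1) ≤ n}. Then |Λ| ≤ 4 n^5 · 16^d. -/

import Mathlib

open Finset

noncomputable def Lam (d n : ℕ) : Finset (Fin d → ℤ) :=
  (Fintype.piFinset fun _ => Finset.Icc (-(n:ℤ)) n).filter
    (fun ν => ∏ l, ((ν l).natAbs + 1) ≤ n)

lemma mem_Lam {d n : ℕ} {ν : Fin d → ℤ} :
    ν ∈ Lam d n ↔ ∏ l, ((ν l).natAbs + 1) ≤ n := by
  constructor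
  · intro h; exact (Finset.mem_filter.1 h).2
  · intro h
    refine Finset.mem_filter.2 ⟨Fintype.mem_piFinset.2 fun l => ?_, h⟩
    have h1 : (ν l).natAbs + 1 ≤ ∏ i, ((ν i).natAbs + 1) :=
      Finset.single_le_prod' (f := fun i => (ν i).natAbs + 1) (fun i _ => Nat.le_add_left 1 _) (Finset.mem_univ l)
    have h2 : (ν l).natAbs + 1 ≤ n := le_trans h1 h
    rw [Finset.mem_Icc]
    omega

lemma sum_natAbs_le (h : ℕ → ℕ) (n : ℕ) :
    ∑ k ∈ Finset.Icc (-(n:ℤ)) n, h k.natAbs ≤ 2 * ∑ j ∈ Finset.range (n+1), h j := by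
  have hsub : Finset.Icc (-(n:ℤ)) n ⊆
      (Finset.range (n+1)).image (fun j : ℕ => (j:ℤ)) ∪
      (Finset.range (n+1)).image (fun j : ℕ => -(j:ℤ)) := by
    intro k hk
    simp only [Finset.mem_Icc] at hk
    simp only [Finset.mem_union, Finset.mem_image, Finset.mem_range]
    rcases le_or_gt 0 k with h0 | h0
    · refine Or.inl ⟨k.natAbs, by omega, ?_⟩
      show (k.natAbs : ℤ) = k; omega
    · refine Or.inr ⟨k.natAbs, by omega, ?_⟩
      show -(k.natAbs : ℤ) = k; omega
  calc ∑ k ∈ Finset.Icc (-(n:ℤ)) n, h k.natAbs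
      ≤ ∑ k ∈ (Finset.range (n+1)).image (fun j : ℕ => (j:ℤ)) ∪
          (Finset.range (n+1)).image (fun j : ℕ => -(j:ℤ)), h k.natAbs :=
        Finset.sum_le_sum_of_subset hsub
    _ ≤ (∑ k ∈ (Finset.range (n+1)).image (fun j : ℕ => (j:ℤ)), h k.natAbs) +
        ∑ k ∈ (Finset.range (n+1)).image (fun j : ℕ => -(j:ℤ)), h k.natAbs :=
        Nat.le.intro Finset.sum_union_inter
    _ = (∑ j ∈ Finset.range (n+1), h j) + ∑ j ∈ Finset.range (n+1), h j := by
        rw [Finset.sum_image (by intro a _ b _ hab; simp only at hab; exact_mod_cast hab),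
            Finset.sum_image (by intro a _ b _ hab; simp only at hab; omega)]
        simp
    _ = 2 * ∑ j ∈ Finset.range (n+1), h j := by ring

lemma key_sum (n : ℕ) : ∑ j ∈ Finset.range (n+1), (n / (j+1))^5 ≤ 2 * n^5 := by
  rw [Finset.sum_range_succ']
  have h1 : ∑ j ∈ Finset.range n, (n / (j+1+1))^5 ≤ n^5 := by
    have hQ : ((∑ j ∈ Finset.range n, (n / (j+2))^5 : ℕ) : ℚ) ≤ (n:ℚ)^5 := by
      push_cast [Nat.cast_sum]
      calc ∑ j ∈ Finset.range n, ((n / (j+2) : ℕ) : ℚ)^5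
          ≤ ∑ j ∈ Finset.range n, (n:ℚ)^5 * (1/((j:ℚ)+1) - 1/((j:ℚ)+2)) := by
            refine Finset.sum_le_sum fun j _ => ?_
            have hc : ((n / (j+2) : ℕ) : ℚ) ≤ (n:ℚ) / ((j:ℚ)+2) := by
              have := Nat.cast_div_le (α := ℚ) (m := n) (n := j+2)
              push_cast at this; convert this using 2 <;> push_cast <;> ring
            have h5 : ((n / (j+2) : ℕ) : ℚ)^5 ≤ ((n:ℚ) / ((j:ℚ)+2))^5 := by
              apply pow_le_pow_left₀ (by positivity) hc
            refine h5.trans ?_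
            have he : (1/((j:ℚ)+1) - 1/((j:ℚ)+2)) = 1/(((j:ℚ)+1)*((j:ℚ)+2)) := by
              field_simp; ring
            rw [he, div_pow, mul_one_div, div_le_div_iff₀ (by positivity) (by positivity)]
            have h2 : (((j:ℚ)+1)*((j:ℚ)+2)) ≤ ((j:ℚ)+2)^5 := by
              calc ((j:ℚ)+1)*((j:ℚ)+2) ≤ ((j:ℚ)+2)^2 := by nlinarith [sq_nonneg ((j:ℚ)+2)]
                _ ≤ ((j:ℚ)+2)^5 := pow_le_pow_right₀ (by linarith [Nat.cast_nonneg (α := ℚ) j]) (by norm_num)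
            nlinarith [pow_nonneg (Nat.cast_nonneg (α := ℚ) n) 5]
        _ = (n:ℚ)^5 * ∑ j ∈ Finset.range n, (1/((j:ℚ)+1) - 1/((j:ℚ)+2)) := by
            rw [Finset.mul_sum]
        _ ≤ (n:ℚ)^5 * 1 := by
            have hts := Finset.sum_range_sub' (f := fun i => 1/((i:ℚ)+1)) n
            push_cast at hts
            simp only [show ∀ x:ℚ, x+1+1 = x+2 from fun x => by ring] at hts
            rw [hts]
            have h1n : (0:ℚ) ≤ 1/((n:ℚ)+1) := by positivity
            have := pow_nonneg (Nat.cast_nonneg (α := ℚ) n) 5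
            nlinarith
        _ = (n:ℚ)^5 := mul_one _
    have : ∑ j ∈ Finset.range n, (n / (j+1+1))^5 = ∑ j ∈ Finset.range n, (n / (j+2))^5 := by
      apply Finset.sum_congr rfl; intro j _; norm_num
    rw [this]; exact_mod_cast hQ
  have h0 : (n / (0+1))^5 = n^5 := by norm_num
  rw [h0]; linarith

set_option maxHeartbeats 1000000 in
lemma Lam_card_bound (d : ℕ) : ∀ n, (Lam d n).card ≤ 4 * n ^ 5 * 16 ^ d := by
  induction d with
  | zero =>
    intro n
    rcases Nat.eq_zero_or_pos n with rfl | hn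
    · have : Lam 0 0 = ∅ := by
        ext ν; simp [mem_Lam]
      simp [this]
    · have hsub : Lam 0 n ⊆ {(fun i => i.elim0 : Fin 0 → ℤ)} := by
        intro ν _
        rw [Finset.mem_singleton]
        funext i; exact i.elim0
      have hc : (Lam 0 n).card ≤ 1 := le_trans (Finset.card_le_card hsub) (by simp)
      have h5 : 1 ≤ n ^ 5 := Nat.one_le_pow _ _ hn
      calc (Lam 0 n).card ≤ 1 := hc
        _ ≤ 4 * n ^ 5 * 16 ^ 0 := by simpa using by nlinarith
  | succ d ih =>
    intro n
    have hsub : Lam (d+1) n ⊆ (Finset.Icc (-(n:ℤ)) n).biUnion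
        (fun k => (Lam d (n / (k.natAbs + 1))).image (Fin.cons k)) := by
      intro ν hν
      rw [mem_Lam] at hν
      have hprod : ∏ l, ((ν l).natAbs + 1) =
          ((ν 0).natAbs + 1) * ∏ l : Fin d, ((Fin.tail ν l).natAbs + 1) := by
        rw [Fin.prod_univ_succ]; rfl
      have h0 : (ν 0).natAbs + 1 ≤ n := by
        have h1 : (ν 0).natAbs + 1 ≤ ∏ i, ((ν i).natAbs + 1) :=
          Finset.single_le_prod' (f := fun i => (ν i).natAbs + 1)
            (fun i _ => Nat.le_add_left 1 _) (Finset.mem_univ 0)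
        exact le_trans h1 hν
      refine Finset.mem_biUnion.2 ⟨ν 0, Finset.mem_Icc.2 (by omega), ?_⟩
      refine Finset.mem_image.2 ⟨Fin.tail ν, ?_, Fin.cons_self_tail ν⟩
      rw [mem_Lam, Nat.le_div_iff_mul_le (Nat.succ_pos _), mul_comm]
      rw [hprod] at hν
      exact hν
    calc (Lam (d+1) n).card
        ≤ ∑ k ∈ Finset.Icc (-(n:ℤ)) n, (Lam d (n / (k.natAbs + 1))).card := by
          classical
          exact le_trans (Finset.card_le_card hsub) (le_trans Finset.card_biUnion_le
            (Finset.sum_le_sum fun k _ => Finset.card_image_le))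
      _ ≤ 2 * ∑ j ∈ Finset.range (n+1), (Lam d (n / (j + 1))).card :=
          sum_natAbs_le (fun j => (Lam d (n / (j + 1))).card) n
      _ ≤ 2 * ∑ j ∈ Finset.range (n+1), 4 * (n / (j+1)) ^ 5 * 16 ^ d := by
          gcongr with j hj
          exact ih _
      _ = 8 * 16 ^ d * ∑ j ∈ Finset.range (n+1), (n / (j+1)) ^ 5 := by
          rw [Finset.mul_sum]; rw [Finset.mul_sum]; congr 1; funext j; ring
      _ ≤ 8 * 16 ^ d * (2 * n ^ 5) := by
          gcongr
          exact key_sum n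
      _ ≤ 4 * n ^ 5 * 16 ^ (d+1) := by
          have h1 : 8 * 16 ^ d * (2 * n ^ 5) = (16 * n ^ 5) * 16 ^ d := by ring
          have h2 : 4 * n ^ 5 * 16 ^ (d+1) = (64 * n ^ 5) * 16 ^ d := by ring
          rw [h1, h2]
          exact Nat.mul_le_mul_right _ (Nat.mul_le_mul_right _ (by norm_num))

/-- the hyperbolic cross `Λ = {ν ∈ ℤ^d : ∏_l (|ν_l|+1) ≤ n}` is finite
with cardinality at most `4 n⁵ 16^d`. -/
theorem hyperbolic_cross_card_bound (d n : ℕ) :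
    {ν : Fin d → ℤ | (∏ l, ((ν l).natAbs + 1)) ≤ n}.Finite ∧
      {ν : Fin d → ℤ | (∏ l, ((ν l).natAbs + 1)) ≤ n}.ncard ≤ 4 * n ^ 5 * 16 ^ d := by
  have hset : {ν : Fin d → ℤ | (∏ l, ((ν l).natAbs + 1)) ≤ n} = ↑(Lam d n) := by
    ext ν; simp [mem_Lam]
  rw [hset]
  exact ⟨(Lam d n).finite_toSet, by rw [Set.ncard_coe_finset]; exact Lam_card_bound d n⟩
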